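/- Let K ≥ 1 and α ≥ 0, and for x ∈ ℝ^K with x_i > 0 for all i define H_α(x) = (∑_{j=1}^K x_j e^{-α x_j}) / (∑_{i=1}^K e^{-α x_i}). Then H_α is concave on the convex set D = {x ∈ ℝ^K : x_i > 0 and α x_i ≤ 1 for all i}; that is, for all x, y ∈ D and all t ∈ [0,1], H_α(t·x + (1−t)·y) ≥ t·H_α(x) + (1−t)·H_α(y). -/

import Mathlib

open Finset

namespace Stmt0Aux

noncomputable section

variable {K : ℕ}

def zf (y u : Fin K → ℝ) (s : ℝ) (j : Fin K) : ℝ := y j + s * u j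

def Ef (α : ℝ) (y u : Fin K → ℝ) (s : ℝ) (j : Fin K) : ℝ := Real.exp (-α * zf y u s j)

def Sf (α : ℝ) (y u : Fin K → ℝ) (s : ℝ) : ℝ := ∑ j, Ef α y u s j
def Nf (α : ℝ) (y u : Fin K → ℝ) (s : ℝ) : ℝ := ∑ j, zf y u s j * Ef α y u s j
def Tf (α : ℝ) (y u : Fin K → ℝ) (s : ℝ) : ℝ := ∑ j, u j * Ef α y u s j
def S1f (α : ℝ) (y u : Fin K → ℝ) (s : ℝ) : ℝ := ∑ j, -α * u j * Ef α y u s j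
def N1f (α : ℝ) (y u : Fin K → ℝ) (s : ℝ) : ℝ :=
  ∑ j, u j * (1 - α * zf y u s j) * Ef α y u s j
def S2f (α : ℝ) (y u : Fin K → ℝ) (s : ℝ) : ℝ := ∑ j, α ^ 2 * u j ^ 2 * Ef α y u s j
def N2f (α : ℝ) (y u : Fin K → ℝ) (s : ℝ) : ℝ :=
  ∑ j, α * u j ^ 2 * (α * zf y u s j - 2) * Ef α y u s j
def Af (α : ℝ) (y u : Fin K → ℝ) (s : ℝ) : ℝ :=
  ∑ j, Ef α y u s j * (u j * Sf α y u s - Tf α y u s) ^ 2 *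
    ((2 - α * zf y u s j) * Sf α y u s + α * Nf α y u s)
def gf (α : ℝ) (y u : Fin K → ℝ) (s : ℝ) : ℝ := Nf α y u s / Sf α y u s
def g1f (α : ℝ) (y u : Fin K → ℝ) (s : ℝ) : ℝ :=
  (N1f α y u s * Sf α y u s - Nf α y u s * S1f α y u s) / Sf α y u s ^ 2
def g2f (α : ℝ) (y u : Fin K → ℝ) (s : ℝ) : ℝ := -α * Af α y u s / Sf α y u s ^ 4

lemma sum_key (α S N T : ℝ) (E z u : Fin K → ℝ) :
    ∑ j, E j * (u j * S - T) ^ 2 * ((2 - α * z j) * S + α * N)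
      = (2*S^3 + α*N*S^2) * (∑ j, u j^2 * E j) - α*S^3 * (∑ j, u j^2 * z j * E j)
        - 2*T*S*(2*S + α*N) * (∑ j, u j * E j) + 2*α*T*S^2 * (∑ j, u j * z j * E j)
        + T^2*(2*S + α*N) * (∑ j, E j) - α*T^2*S * (∑ j, z j * E j) := by
  simp only [Finset.mul_sum, ← Finset.sum_sub_distrib, ← Finset.sum_add_distrib]
  exact Finset.sum_congr rfl fun j _ => by ring

lemma hasDerivAt_zf (y u : Fin K → ℝ) (s : ℝ) (j : Fin K) :
    HasDerivAt (fun s => zf y u s j) (u j) s := by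
  simpa [zf] using (hasDerivAt_mul_const (u j)).const_add (y j)

lemma hasDerivAt_Ef (α : ℝ) (y u : Fin K → ℝ) (s : ℝ) (j : Fin K) :
    HasDerivAt (fun s => Ef α y u s j) (-α * u j * Ef α y u s j) s := by
  have h1 : HasDerivAt (fun s => -α * zf y u s j) (-α * u j) s :=
    (hasDerivAt_zf y u s j).const_mul (-α)
  have h2 := h1.exp
  have e : Real.exp (-α * zf y u s j) * (-α * u j) = -α * u j * Ef α y u s j := by
    unfold Ef; ring
  exact e ▸ h2

lemma hasDerivAt_Sf (α : ℝ) (y u : Fin K → ℝ) (s : ℝ) :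
    HasDerivAt (Sf α y u) (S1f α y u s) s := by
  unfold Sf S1f
  exact HasDerivAt.fun_sum fun j _ => hasDerivAt_Ef α y u s j

lemma hasDerivAt_Nf (α : ℝ) (y u : Fin K → ℝ) (s : ℝ) :
    HasDerivAt (Nf α y u) (N1f α y u s) s := by
  unfold Nf N1f
  have h := HasDerivAt.fun_sum
    (fun j (_ : j ∈ Finset.univ) => (hasDerivAt_zf y u s j).mul (hasDerivAt_Ef α y u s j))
  have e : ∑ j, (u j * Ef α y u s j + zf y u s j * (-α * u j * Ef α y u s j))
      = ∑ j, u j * (1 - α * zf y u s j) * Ef α y u s j :=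
    Finset.sum_congr rfl fun j _ => by ring
  exact e ▸ h

lemma hasDerivAt_S1f (α : ℝ) (y u : Fin K → ℝ) (s : ℝ) :
    HasDerivAt (S1f α y u) (S2f α y u s) s := by
  unfold S1f S2f
  have h := HasDerivAt.fun_sum
    (fun j (_ : j ∈ Finset.univ) => (hasDerivAt_Ef α y u s j).const_mul (-α * u j))
  have e : ∑ j, -α * u j * (-α * u j * Ef α y u s j)
      = ∑ j, α ^ 2 * u j ^ 2 * Ef α y u s j :=
    Finset.sum_congr rfl fun j _ => by ring
  exact e ▸ h

lemma hasDerivAt_N1f (α : ℝ) (y u : Fin K → ℝ) (s : ℝ) :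
    HasDerivAt (N1f α y u) (N2f α y u s) s := by
  unfold N1f N2f
  have hterm : ∀ j : Fin K, HasDerivAt (fun s => u j * (1 - α * zf y u s j))
      (u j * -(α * u j)) s := by
    intro j
    exact (((hasDerivAt_zf y u s j).const_mul α).const_sub 1).const_mul (u j)
  have h := HasDerivAt.fun_sum
    (fun j (_ : j ∈ Finset.univ) => (hterm j).mul (hasDerivAt_Ef α y u s j))
  have e : ∑ j, (u j * -(α * u j) * Ef α y u s j
        + u j * (1 - α * zf y u s j) * (-α * u j * Ef α y u s j))
      = ∑ j, α * u j ^ 2 * (α * zf y u s j - 2) * Ef α y u s j :=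
    Finset.sum_congr rfl fun j _ => by ring
  exact e ▸ h

lemma Sf_pos (hK : 0 < K) (α : ℝ) (y u : Fin K → ℝ) (s : ℝ) : 0 < Sf α y u s := by
  haveI : Nonempty (Fin K) := Fin.pos_iff_nonempty.mp hK
  exact Finset.sum_pos (fun j _ => Real.exp_pos _) Finset.univ_nonempty

lemma hasDerivAt_gf (hK : 0 < K) (α : ℝ) (y u : Fin K → ℝ) (s : ℝ) :
    HasDerivAt (gf α y u) (g1f α y u s) s := by
  unfold gf g1f
  exact (hasDerivAt_Nf α y u s).div (hasDerivAt_Sf α y u s) (Sf_pos hK α y u s).ne'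

lemma hasDerivAt_g1f (hK : 0 < K) (α : ℝ) (y u : Fin K → ℝ) (s : ℝ) :
    HasDerivAt (g1f α y u) (g2f α y u s) s := by
  have hS := hasDerivAt_Sf α y u s
  have hN := hasDerivAt_Nf α y u s
  have hS1 := hasDerivAt_S1f α y u s
  have hN1 := hasDerivAt_N1f α y u s
  have hSpos := Sf_pos hK α y u s
  have hP : HasDerivAt (fun s => N1f α y u s * Sf α y u s - Nf α y u s * S1f α y u s)
      (N2f α y u s * Sf α y u s + N1f α y u s * S1f α y u s
        - (N1f α y u s * S1f α y u s + Nf α y u s * S2f α y u s)) s :=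
    (hN1.mul hS).sub (hN.mul hS1)
  have hQ : HasDerivAt (fun s => Sf α y u s ^ 2) (2 * Sf α y u s * S1f α y u s) s := by
    have := hS.pow 2; simp at this; exact this
  have hraw := hP.div hQ (pow_ne_zero 2 hSpos.ne')
  have hT1 : S1f α y u s = -α * Tf α y u s := by
    unfold S1f Tf; rw [Finset.mul_sum]; exact Finset.sum_congr rfl fun j _ => by ring
  have hN1e : N1f α y u s
      = Tf α y u s - α * ∑ j, u j * zf y u s j * Ef α y u s j := by
    unfold N1f Tf
    rw [Finset.mul_sum, ← Finset.sum_sub_distrib]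
    exact Finset.sum_congr rfl fun j _ => by ring
  have hS2e : S2f α y u s = α ^ 2 * ∑ j, u j ^ 2 * Ef α y u s j := by
    unfold S2f
    rw [Finset.mul_sum]
    exact Finset.sum_congr rfl fun j _ => by ring
  have hN2e : N2f α y u s
      = α ^ 2 * (∑ j, u j ^ 2 * zf y u s j * Ef α y u s j)
        - 2 * α * ∑ j, u j ^ 2 * Ef α y u s j := by
    unfold N2f
    rw [Finset.mul_sum, Finset.mul_sum, ← Finset.sum_sub_distrib]
    exact Finset.sum_congr rfl fun j _ => by ring
  have hAe : Af α y u s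
      = (2*Sf α y u s^3 + α*Nf α y u s*Sf α y u s^2) * (∑ j, u j^2 * Ef α y u s j)
        - α*Sf α y u s^3 * (∑ j, u j^2 * zf y u s j * Ef α y u s j)
        - 2*Tf α y u s*Sf α y u s*(2*Sf α y u s + α*Nf α y u s) * Tf α y u s
        + 2*α*Tf α y u s*Sf α y u s^2 * (∑ j, u j * zf y u s j * Ef α y u s j)
        + Tf α y u s^2*(2*Sf α y u s + α*Nf α y u s) * Sf α y u s
        - α*Tf α y u s^2*Sf α y u s * Nf α y u s :=
    sum_key α (Sf α y u s) (Nf α y u s) (Tf α y u s)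
      (fun j => Ef α y u s j) (fun j => zf y u s j) u
  have heq : ((N2f α y u s * Sf α y u s + N1f α y u s * S1f α y u s
        - (N1f α y u s * S1f α y u s + Nf α y u s * S2f α y u s)) * Sf α y u s ^ 2
        - (N1f α y u s * Sf α y u s - Nf α y u s * S1f α y u s)
          * (2 * Sf α y u s * S1f α y u s)) / (Sf α y u s ^ 2) ^ 2
      = -α * Af α y u s / Sf α y u s ^ 4 := by
    rw [hAe, hT1, hN1e, hS2e, hN2e]
    field_simp
    ring
  rw [heq] at hraw
  exact hraw

lemma concave_gf (hK : 0 < K) (α : ℝ) (hα : 0 ≤ α) (x y : Fin K → ℝ)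
    (hx : ∀ i, 0 < x i ∧ α * x i ≤ 1) (hy : ∀ i, 0 < y i ∧ α * y i ≤ 1) :
    ConcaveOn ℝ (Set.Icc (0:ℝ) 1) (gf α y (fun j => x j - y j)) := by
  haveI : Nonempty (Fin K) := Fin.pos_iff_nonempty.mp hK
  set u : Fin K → ℝ := fun j => x j - y j with hu
  refine concaveOn_of_hasDerivWithinAt2_nonpos (f' := g1f α y u) (f'' := g2f α y u)
    (convex_Icc 0 1) ?_ ?_ ?_ ?_
  · exact fun s _ => (hasDerivAt_gf hK α y u s).continuousAt.continuousWithinAt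
  · exact fun s _ => (hasDerivAt_gf hK α y u s).hasDerivWithinAt
  · exact fun s _ => (hasDerivAt_g1f hK α y u s).hasDerivWithinAt
  · intro s hs
    rw [interior_Icc] at hs
    have hs0 : 0 < s := hs.1
    have hs1 : s < 1 := hs.2
    have hzpos : ∀ j, 0 < zf y u s j := by
      intro j
      have h1 := mul_pos hs0 (hx j).1
      have h2 := mul_pos (sub_pos.2 hs1) (hy j).1
      simp only [zf, hu]
      nlinarith
    have hzle : ∀ j, α * zf y u s j ≤ 1 := by
      intro j
      have h1 := mul_le_mul_of_nonneg_left (hx j).2 hs0.le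
      have h2 := mul_le_mul_of_nonneg_left (hy j).2 (by linarith : (0:ℝ) ≤ 1 - s)
      simp only [zf, hu]
      nlinarith
    have hSpos := Sf_pos hK α y u s
    have hNpos : 0 < Nf α y u s :=
      Finset.sum_pos (fun j _ => mul_pos (hzpos j) (Real.exp_pos _)) Finset.univ_nonempty
    have hAnn : 0 ≤ Af α y u s := by
      refine Finset.sum_nonneg fun j _ => ?_
      refine mul_nonneg (mul_nonneg (Real.exp_pos _).le (sq_nonneg _)) ?_
      have h3 : (0:ℝ) ≤ 2 - α * zf y u s j := by linarith [hzle j]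
      exact add_nonneg (mul_nonneg h3 hSpos.le) (mul_nonneg hα hNpos.le)
    unfold g2f
    apply div_nonpos_of_nonpos_of_nonneg
    · exact mul_nonpos_of_nonpos_of_nonneg (neg_nonpos.2 hα) hAnn
    · exact (pow_pos hSpos 4).le

end

end Stmt0Aux

/-- Lemma 1 (concavity part): for `K ≥ 1`, `α ≥ 0`, the function
`H_α(x) = (∑ j, x_j e^{-α x_j}) / (∑ i, e^{-α x_i})` is concave on
`D = {x : ∀ i, 0 < x_i ∧ α x_i ≤ 1}`. -/
theorem stmt_0 (K : ℕ) (hK : 1 ≤ K) (α : ℝ) (hα : 0 ≤ α)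
    (x y : Fin K → ℝ)
    (hx : ∀ i, 0 < x i ∧ α * x i ≤ 1)
    (hy : ∀ i, 0 < y i ∧ α * y i ≤ 1)
    (t : ℝ) (ht0 : 0 ≤ t) (ht1 : t ≤ 1) :
    t * ((∑ j, x j * Real.exp (-α * x j)) / (∑ i, Real.exp (-α * x i)))
      + (1 - t) * ((∑ j, y j * Real.exp (-α * y j)) / (∑ i, Real.exp (-α * y i)))
    ≤ (∑ j, (t * x j + (1 - t) * y j) * Real.exp (-α * (t * x j + (1 - t) * y j)))
        / (∑ i, Real.exp (-α * (t * x i + (1 - t) * y i))) := by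
  have hK' : 0 < K := by omega
  have hconc := Stmt0Aux.concave_gf hK' α hα x y hx hy
  have h := hconc.2 (Set.right_mem_Icc.2 zero_le_one) (Set.left_mem_Icc.2 zero_le_one)
    ht0 (by linarith : (0:ℝ) ≤ 1 - t) (by ring)
  simp only [smul_eq_mul, mul_one, mul_zero, add_zero] at h
  have hz1 : ∀ j, Stmt0Aux.zf y (fun j => x j - y j) 1 j = x j := by
    intro j; simp [Stmt0Aux.zf]
  have hz0 : ∀ j, Stmt0Aux.zf y (fun j => x j - y j) 0 j = y j := by
    intro j; simp [Stmt0Aux.zf]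
  have hzt : ∀ j, Stmt0Aux.zf y (fun j => x j - y j) t j = t * x j + (1 - t) * y j := by
    intro j; simp only [Stmt0Aux.zf]; ring
  have e1 : Stmt0Aux.gf α y (fun j => x j - y j) 1
      = (∑ j, x j * Real.exp (-α * x j)) / (∑ i, Real.exp (-α * x i)) := by
    unfold Stmt0Aux.gf Stmt0Aux.Nf Stmt0Aux.Sf Stmt0Aux.Ef
    congr 1 <;> exact Finset.sum_congr rfl fun j _ => by rw [hz1 j]
  have e0 : Stmt0Aux.gf α y (fun j => x j - y j) 0
      = (∑ j, y j * Real.exp (-α * y j)) / (∑ i, Real.exp (-α * y i)) := by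
    unfold Stmt0Aux.gf Stmt0Aux.Nf Stmt0Aux.Sf Stmt0Aux.Ef
    congr 1 <;> exact Finset.sum_congr rfl fun j _ => by rw [hz0 j]
  have et : Stmt0Aux.gf α y (fun j => x j - y j) t
      = (∑ j, (t * x j + (1 - t) * y j) * Real.exp (-α * (t * x j + (1 - t) * y j)))
        / (∑ i, Real.exp (-α * (t * x i + (1 - t) * y i))) := by
    unfold Stmt0Aux.gf Stmt0Aux.Nf Stmt0Aux.Sf Stmt0Aux.Ef
    congr 1 <;> exact Finset.sum_congr rfl fun j _ => by rw [hzt j]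
  rw [e1, e0, et] at h
  exact h
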